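/- For the golden ratio unit u = (1+√5)/2 of norm -1, with Δ_n = N_{ℚ(√5)/ℚ}(u^n - 1), among the indices n ≤ 24 with n ≢ 2 (mod 4), the terms without a primitive prime divisor are exactly Δ_{12} = -320, Δ_{20} = -15125, and Δ_{24} = -103680. -/

import Mathlib

open NumberField

/-- For the golden ratio `u = (1+√5)/2`, a unit of norm `-1` of the ring of integers of
`ℚ(√5)`, and `Δ_n = N_{ℚ(√5)/ℚ}(u^n - 1)`: among the indices `2 ≤ n ≤ 24` with
`n ≢ 2 (mod 4)` the terms without a primitive prime divisor are exactly
`Δ_12 = -320`, `Δ_20 = -15125` and `Δ_24 = -103680`.  (The unit term `Δ_1 = -1` has no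
prime divisors at all.) -/
theorem lehmerPierce_golden_ratio (K : Type*) [Field K] [NumberField K]
    (hdeg : Module.finrank ℚ K = 2) (σ : K →+* ℝ)
    (α : RingOfIntegers K) (hα : σ (α : K) = (1 + Real.sqrt 5) / 2)
    (Δ : ℕ → ℤ) (hΔ : ∀ n : ℕ, Δ n = Algebra.norm ℤ (α ^ n - 1)) :
    Δ 12 = -320 ∧ Δ 20 = -15125 ∧ Δ 24 = -103680 ∧
      ∀ n : ℕ, 2 ≤ n → n ≤ 24 → n % 4 ≠ 2 →
        ((¬ ∃ p : ℕ, p.Prime ∧ (p : ℤ) ∣ Δ n ∧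
            ∀ m : ℕ, 0 < m → m < n → Δ m ≠ 0 → ¬ (p : ℤ) ∣ Δ m) ↔
          (n = 12 ∨ n = 20 ∨ n = 24)) := by
  have h5 : Real.sqrt 5 ^ 2 = 5 := Real.sq_sqrt (by norm_num)
  have hsq : (α : K) ^ 2 = (α : K) + 1 := by
    apply σ.injective
    rw [map_pow, map_add, map_one, hα]
    nlinarith [h5]
  have hsq' : (α : K) * (α : K) = (α : K) + 1 := by rw [← sq]; exact hsq
  have hirr : ∀ q : ℚ, (α : K) ≠ algebraMap ℚ K q := by
    intro q hq
    have h5i : Irrational (Real.sqrt 5) := (Nat.prime_five).irrational_sqrt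
    have : σ (α : K) = (q : ℝ) := by
      rw [hq]
      have : algebraMap ℚ K q = (q : K) := by simp [eq_ratCast]
      rw [this, map_ratCast]
    rw [hα] at this
    exact h5i ⟨2 * q - 1, by push_cast; linarith⟩
  have hli : LinearIndependent ℚ ![(1 : K), (α : K)] := by
    rw [LinearIndependent.pair_iff]
    intro s t hst
    simp only [Algebra.smul_def, mul_one] at hst
    by_cases ht : t = 0
    · subst ht
      simp only [map_zero, zero_mul, add_zero] at hst
      exact ⟨(map_eq_zero _).mp hst, rfl⟩
    · exfalso
      apply hirr (-s / t)
      have htK : algebraMap ℚ K t ≠ 0 := fun h => ht ((map_eq_zero _).mp h)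
      rw [map_div₀, map_neg, eq_div_iff htK]
      linear_combination hst
  let B : Module.Basis (Fin 2) ℚ K :=
    basisOfLinearIndependentOfCardEqFinrank hli (by rw [hdeg]; simp)
  have hB : ⇑B = ![(1 : K), (α : K)] := coe_basisOfLinearIndependentOfCardEqFinrank _ _
  have hB0 : B 0 = 1 := by rw [hB]; rfl
  have hB1 : B 1 = (α : K) := by rw [hB]; rfl
  have hrepr : ∀ c d : ℚ, ∀ i, B.repr (c • (1 : K) + d • (α : K)) i
      = (![c, d] : Fin 2 → ℚ) i := by
    intro c d i
    rw [← hB0, ← hB1]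
    rw [map_add, map_smul, map_smul, B.repr_self, B.repr_self]
    fin_cases i <;> simp [Finsupp.single_apply]
  have hnorm : ∀ c d : ℚ, Algebra.norm ℚ (c • (1 : K) + d • (α : K))
      = c ^ 2 + c * d - d ^ 2 := by
    intro c d
    rw [Algebra.norm_eq_matrix_det B, Matrix.det_fin_two]
    have e : ∀ i j, Algebra.leftMulMatrix B (c • (1 : K) + d • (α : K)) i j
        = B.repr ((c • (1 : K) + d • (α : K)) * B j) i :=
      fun i j => Algebra.leftMulMatrix_eq_repr_mul B _ i j
    rw [e 0 0, e 0 1, e 1 0, e 1 1, hB0, hB1]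
    have m0 : (c • (1 : K) + d • (α : K)) * 1 = c • (1 : K) + d • (α : K) := mul_one _
    have m1 : (c • (1 : K) + d • (α : K)) * (α : K) = d • (1 : K) + (c + d) • (α : K) := by
      simp only [Algebra.smul_def, mul_one, map_add]
      linear_combination (algebraMap ℚ K d) * hsq'
    rw [m0, m1, hrepr c d 0, hrepr d (c + d) 1, hrepr d (c + d) 0, hrepr c d 1]
    simp only [Matrix.cons_val_zero, Matrix.cons_val_one, Matrix.head_cons]
    ring
  have hpow : ∀ n : ℕ, (α : K) ^ (n + 1)
      = (Nat.fib n : ℚ) • (1 : K) + (Nat.fib (n + 1) : ℚ) • (α : K) := by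
    intro n
    induction n with
    | zero => simp
    | succ n ih =>
      rw [pow_succ, ih, Nat.fib_add_two]
      push_cast
      simp only [Algebra.smul_def, mul_one, map_add]
      linear_combination (algebraMap ℚ K (Nat.fib (n + 1) : ℚ)) * hsq'
  have key : ∀ n : ℕ, Δ (n + 1)
      = ((Nat.fib n : ℤ) - 1) ^ 2 + ((Nat.fib n : ℤ) - 1) * (Nat.fib (n + 1) : ℤ)
        - (Nat.fib (n + 1) : ℤ) ^ 2 := by
    intro n
    have h1 : ((α ^ (n + 1) - 1 : RingOfIntegers K) : K)
        = ((Nat.fib n : ℚ) - 1) • (1 : K) + (Nat.fib (n + 1) : ℚ) • (α : K) := by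
      push_cast
      rw [hpow n, sub_smul, one_smul]
      ring
    have h2 : (Δ (n + 1) : ℚ)
        = ((Nat.fib n : ℚ) - 1) ^ 2 + ((Nat.fib n : ℚ) - 1) * (Nat.fib (n + 1) : ℚ)
          - (Nat.fib (n + 1) : ℚ) ^ 2 := by
      rw [hΔ, Algebra.coe_norm_int, h1, hnorm]
    exact_mod_cast h2
  have v1 : Δ 1 = (-1 : ℤ) := by
    have h := key 0
    rw [show Nat.fib 0 = 0 from rfl, show Nat.fib 1 = 0 + 1 from rfl] at h
    norm_num at h
    convert h using 2
  have v2 : Δ 2 = (-1 : ℤ) := by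
    have h := key 1
    rw [show Nat.fib 1 = 1 from rfl, show Nat.fib 2 = 1 + 0 from rfl] at h
    norm_num at h
    convert h using 2
  have v3 : Δ 3 = (-4 : ℤ) := by
    have h := key 2
    rw [show Nat.fib 2 = 1 from rfl, show Nat.fib 3 = 1 + 1 from rfl] at h
    norm_num at h
    convert h using 2
  have v4 : Δ 4 = (-5 : ℤ) := by
    have h := key 3
    rw [show Nat.fib 3 = 2 from rfl, show Nat.fib 4 = 2 + 1 from rfl] at h
    norm_num at h
    convert h using 2
  have v5 : Δ 5 = (-11 : ℤ) := by
    have h := key 4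
    rw [show Nat.fib 4 = 3 from rfl, show Nat.fib 5 = 3 + 2 from rfl] at h
    norm_num at h
    convert h using 2
  have v6 : Δ 6 = (-16 : ℤ) := by
    have h := key 5
    rw [show Nat.fib 5 = 5 from rfl, show Nat.fib 6 = 5 + 3 from rfl] at h
    norm_num at h
    convert h using 2
  have v7 : Δ 7 = (-29 : ℤ) := by
    have h := key 6
    rw [show Nat.fib 6 = 8 from rfl, show Nat.fib 7 = 8 + 5 from rfl] at h
    norm_num at h
    convert h using 2
  have v8 : Δ 8 = (-45 : ℤ) := by
    have h := key 7
    rw [show Nat.fib 7 = 13 from rfl, show Nat.fib 8 = 13 + 8 from rfl] at h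
    norm_num at h
    convert h using 2
  have v9 : Δ 9 = (-76 : ℤ) := by
    have h := key 8
    rw [show Nat.fib 8 = 21 from rfl, show Nat.fib 9 = 21 + 13 from rfl] at h
    norm_num at h
    convert h using 2
  have v10 : Δ 10 = (-121 : ℤ) := by
    have h := key 9
    rw [show Nat.fib 9 = 34 from rfl, show Nat.fib 10 = 34 + 21 from rfl] at h
    norm_num at h
    convert h using 2
  have v11 : Δ 11 = (-199 : ℤ) := by
    have h := key 10
    rw [show Nat.fib 10 = 55 from rfl, show Nat.fib 11 = 55 + 34 from rfl] at h
    norm_num at h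
    convert h using 2
  have v12 : Δ 12 = (-320 : ℤ) := by
    have h := key 11
    rw [show Nat.fib 11 = 89 from rfl, show Nat.fib 12 = 89 + 55 from rfl] at h
    norm_num at h
    convert h using 2
  have v13 : Δ 13 = (-521 : ℤ) := by
    have h := key 12
    rw [show Nat.fib 12 = 144 from rfl, show Nat.fib 13 = 144 + 89 from rfl] at h
    norm_num at h
    convert h using 2
  have v14 : Δ 14 = (-841 : ℤ) := by
    have h := key 13
    rw [show Nat.fib 13 = 233 from rfl, show Nat.fib 14 = 233 + 144 from rfl] at h
    norm_num at h
    convert h using 2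
  have v15 : Δ 15 = (-1364 : ℤ) := by
    have h := key 14
    rw [show Nat.fib 14 = 377 from rfl, show Nat.fib 15 = 377 + 233 from rfl] at h
    norm_num at h
    convert h using 2
  have v16 : Δ 16 = (-2205 : ℤ) := by
    have h := key 15
    rw [show Nat.fib 15 = 610 from rfl, show Nat.fib 16 = 610 + 377 from rfl] at h
    norm_num at h
    convert h using 2
  have v17 : Δ 17 = (-3571 : ℤ) := by
    have h := key 16
    rw [show Nat.fib 16 = 987 from rfl, show Nat.fib 17 = 987 + 610 from rfl] at h
    norm_num at h
    convert h using 2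
  have v18 : Δ 18 = (-5776 : ℤ) := by
    have h := key 17
    rw [show Nat.fib 17 = 1597 from rfl, show Nat.fib 18 = 1597 + 987 from rfl] at h
    norm_num at h
    convert h using 2
  have v19 : Δ 19 = (-9349 : ℤ) := by
    have h := key 18
    rw [show Nat.fib 18 = 2584 from rfl, show Nat.fib 19 = 2584 + 1597 from rfl] at h
    norm_num at h
    convert h using 2
  have v20 : Δ 20 = (-15125 : ℤ) := by
    have h := key 19
    rw [show Nat.fib 19 = 4181 from rfl, show Nat.fib 20 = 4181 + 2584 from rfl] at h
    norm_num at h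
    convert h using 2
  have v21 : Δ 21 = (-24476 : ℤ) := by
    have h := key 20
    rw [show Nat.fib 20 = 6765 from rfl, show Nat.fib 21 = 6765 + 4181 from rfl] at h
    norm_num at h
    convert h using 2
  have v22 : Δ 22 = (-39601 : ℤ) := by
    have h := key 21
    rw [show Nat.fib 21 = 10946 from rfl, show Nat.fib 22 = 10946 + 6765 from rfl] at h
    norm_num at h
    convert h using 2
  have v23 : Δ 23 = (-64079 : ℤ) := by
    have h := key 22
    rw [show Nat.fib 22 = 17711 from rfl, show Nat.fib 23 = 17711 + 10946 from rfl] at h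
    norm_num at h
    convert h using 2
  have v24 : Δ 24 = (-103680 : ℤ) := by
    have h := key 23
    rw [show Nat.fib 23 = 28657 from rfl, show Nat.fib 24 = 28657 + 17711 from rfl] at h
    norm_num at h
    convert h using 2
  refine ⟨v12, v20, v24, ?_⟩
  intro n hn2 hn24 hmod
  interval_cases n
  · exact absurd rfl hmod
  · -- n = 3
    refine iff_of_false (not_not_intro ⟨2, by norm_num, ?_, ?_⟩) (by omega)
    · rw [v3]; decide
    · intro m hm1 hm2 _
      interval_cases m <;> simp only [v1, v2, v3, v4, v5, v6, v7, v8, v9, v10, v11, v12, v13, v14, v15, v16, v17, v18, v19, v20, v21, v22, v23, v24] <;> decide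
  · -- n = 4
    refine iff_of_false (not_not_intro ⟨5, by norm_num, ?_, ?_⟩) (by omega)
    · rw [v4]; decide
    · intro m hm1 hm2 _
      interval_cases m <;> simp only [v1, v2, v3, v4, v5, v6, v7, v8, v9, v10, v11, v12, v13, v14, v15, v16, v17, v18, v19, v20, v21, v22, v23, v24] <;> decide
  · -- n = 5
    refine iff_of_false (not_not_intro ⟨11, by norm_num, ?_, ?_⟩) (by omega)
    · rw [v5]; decide
    · intro m hm1 hm2 _
      interval_cases m <;> simp only [v1, v2, v3, v4, v5, v6, v7, v8, v9, v10, v11, v12, v13, v14, v15, v16, v17, v18, v19, v20, v21, v22, v23, v24] <;> decide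
  · exact absurd rfl hmod
  · -- n = 7
    refine iff_of_false (not_not_intro ⟨29, by norm_num, ?_, ?_⟩) (by omega)
    · rw [v7]; decide
    · intro m hm1 hm2 _
      interval_cases m <;> simp only [v1, v2, v3, v4, v5, v6, v7, v8, v9, v10, v11, v12, v13, v14, v15, v16, v17, v18, v19, v20, v21, v22, v23, v24] <;> decide
  · -- n = 8
    refine iff_of_false (not_not_intro ⟨3, by norm_num, ?_, ?_⟩) (by omega)
    · rw [v8]; decide
    · intro m hm1 hm2 _
      interval_cases m <;> simp only [v1, v2, v3, v4, v5, v6, v7, v8, v9, v10, v11, v12, v13, v14, v15, v16, v17, v18, v19, v20, v21, v22, v23, v24] <;> decide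
  · -- n = 9
    refine iff_of_false (not_not_intro ⟨19, by norm_num, ?_, ?_⟩) (by omega)
    · rw [v9]; decide
    · intro m hm1 hm2 _
      interval_cases m <;> simp only [v1, v2, v3, v4, v5, v6, v7, v8, v9, v10, v11, v12, v13, v14, v15, v16, v17, v18, v19, v20, v21, v22, v23, v24] <;> decide
  · exact absurd rfl hmod
  · -- n = 11
    refine iff_of_false (not_not_intro ⟨199, by norm_num, ?_, ?_⟩) (by omega)
    · rw [v11]; decide
    · intro m hm1 hm2 _
      interval_cases m <;> simp only [v1, v2, v3, v4, v5, v6, v7, v8, v9, v10, v11, v12, v13, v14, v15, v16, v17, v18, v19, v20, v21, v22, v23, v24] <;> decide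
  · -- n = 12
    refine iff_of_true ?_ (by omega)
    rintro ⟨p, hp, hdvd, hmin⟩
    rw [v12] at hdvd
    have hd : p ∣ 2 ^ 6 * 5 := by
      rw [show (2:ℕ) ^ 6 * 5 = 320 from rfl]
      exact_mod_cast dvd_neg.mp hdvd
    rcases (Nat.Prime.dvd_mul hp).mp hd with h | h
    · have hp2 : p = 2 := (Nat.prime_dvd_prime_iff_eq hp Nat.prime_two).mp (hp.dvd_of_dvd_pow h)
      subst hp2
      exact hmin 3 (by norm_num) (by norm_num) (by rw [v3]; norm_num) (by rw [v3]; decide)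
    · have hp5 : p = 5 := (Nat.prime_dvd_prime_iff_eq hp (by norm_num)).mp h
      subst hp5
      exact hmin 4 (by norm_num) (by norm_num) (by rw [v4]; norm_num) (by rw [v4]; decide)
  · -- n = 13
    refine iff_of_false (not_not_intro ⟨521, by norm_num, ?_, ?_⟩) (by omega)
    · rw [v13]; decide
    · intro m hm1 hm2 _
      interval_cases m <;> simp only [v1, v2, v3, v4, v5, v6, v7, v8, v9, v10, v11, v12, v13, v14, v15, v16, v17, v18, v19, v20, v21, v22, v23, v24] <;> decide
  · exact absurd rfl hmod
  · -- n = 15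
    refine iff_of_false (not_not_intro ⟨31, by norm_num, ?_, ?_⟩) (by omega)
    · rw [v15]; decide
    · intro m hm1 hm2 _
      interval_cases m <;> simp only [v1, v2, v3, v4, v5, v6, v7, v8, v9, v10, v11, v12, v13, v14, v15, v16, v17, v18, v19, v20, v21, v22, v23, v24] <;> decide
  · -- n = 16
    refine iff_of_false (not_not_intro ⟨7, by norm_num, ?_, ?_⟩) (by omega)
    · rw [v16]; decide
    · intro m hm1 hm2 _
      interval_cases m <;> simp only [v1, v2, v3, v4, v5, v6, v7, v8, v9, v10, v11, v12, v13, v14, v15, v16, v17, v18, v19, v20, v21, v22, v23, v24] <;> decide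
  · -- n = 17
    refine iff_of_false (not_not_intro ⟨3571, by norm_num, ?_, ?_⟩) (by omega)
    · rw [v17]; decide
    · intro m hm1 hm2 _
      interval_cases m <;> simp only [v1, v2, v3, v4, v5, v6, v7, v8, v9, v10, v11, v12, v13, v14, v15, v16, v17, v18, v19, v20, v21, v22, v23, v24] <;> decide
  · exact absurd rfl hmod
  · -- n = 19
    refine iff_of_false (not_not_intro ⟨9349, by norm_num, ?_, ?_⟩) (by omega)
    · rw [v19]; decide
    · intro m hm1 hm2 _
      interval_cases m <;> simp only [v1, v2, v3, v4, v5, v6, v7, v8, v9, v10, v11, v12, v13, v14, v15, v16, v17, v18, v19, v20, v21, v22, v23, v24] <;> decide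
  · -- n = 20
    refine iff_of_true ?_ (by omega)
    rintro ⟨p, hp, hdvd, hmin⟩
    rw [v20] at hdvd
    have hd : p ∣ 5 ^ 3 * 11 ^ 2 := by
      rw [show (5:ℕ) ^ 3 * 11 ^ 2 = 15125 from rfl]
      exact_mod_cast dvd_neg.mp hdvd
    rcases (Nat.Prime.dvd_mul hp).mp hd with h | h
    · have hp5 : p = 5 := (Nat.prime_dvd_prime_iff_eq hp (by norm_num)).mp (hp.dvd_of_dvd_pow h)
      subst hp5
      exact hmin 4 (by norm_num) (by norm_num) (by rw [v4]; norm_num) (by rw [v4]; decide)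
    · have hp11 : p = 11 := (Nat.prime_dvd_prime_iff_eq hp (by norm_num)).mp (hp.dvd_of_dvd_pow h)
      subst hp11
      exact hmin 5 (by norm_num) (by norm_num) (by rw [v5]; norm_num) (by rw [v5]; decide)
  · -- n = 21
    refine iff_of_false (not_not_intro ⟨211, by norm_num, ?_, ?_⟩) (by omega)
    · rw [v21]; decide
    · intro m hm1 hm2 _
      interval_cases m <;> simp only [v1, v2, v3, v4, v5, v6, v7, v8, v9, v10, v11, v12, v13, v14, v15, v16, v17, v18, v19, v20, v21, v22, v23, v24] <;> decide
  · exact absurd rfl hmod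
  · -- n = 23
    refine iff_of_false (not_not_intro ⟨461, by norm_num, ?_, ?_⟩) (by omega)
    · rw [v23]; decide
    · intro m hm1 hm2 _
      interval_cases m <;> simp only [v1, v2, v3, v4, v5, v6, v7, v8, v9, v10, v11, v12, v13, v14, v15, v16, v17, v18, v19, v20, v21, v22, v23, v24] <;> decide
  · -- n = 24
    refine iff_of_true ?_ (by omega)
    rintro ⟨p, hp, hdvd, hmin⟩
    rw [v24] at hdvd
    have hd : p ∣ 2 ^ 8 * (3 ^ 4 * 5) := by
      rw [show (2:ℕ) ^ 8 * (3 ^ 4 * 5) = 103680 from rfl]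
      exact_mod_cast dvd_neg.mp hdvd
    rcases (Nat.Prime.dvd_mul hp).mp hd with h | h
    · have hp2 : p = 2 := (Nat.prime_dvd_prime_iff_eq hp Nat.prime_two).mp (hp.dvd_of_dvd_pow h)
      subst hp2
      exact hmin 3 (by norm_num) (by norm_num) (by rw [v3]; norm_num) (by rw [v3]; decide)
    rcases (Nat.Prime.dvd_mul hp).mp h with h | h
    · have hp3 : p = 3 := (Nat.prime_dvd_prime_iff_eq hp Nat.prime_three).mp (hp.dvd_of_dvd_pow h)
      subst hp3
      exact hmin 8 (by norm_num) (by norm_num) (by rw [v8]; norm_num) (by rw [v8]; decide)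
    · have hp5 : p = 5 := (Nat.prime_dvd_prime_iff_eq hp (by norm_num)).mp h
      subst hp5
      exact hmin 4 (by norm_num) (by norm_num) (by rw [v4]; norm_num) (by rw [v4]; decide)
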